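/- Suppose dim P = 3 and dim R = 2s for some positive integer s. Then there exists an abelian subspace E ⊆ Hom(P,R) with dim E = 3s; hence the bound dim E ≤ (3/2)·dim R is sharp when dim R is even. -/

import Mathlib

open Module

/-- A linear subspace `E ⊆ Hom(P,R)` is *abelian* (with respect to a bilinear form `Q` on `R`)
if `Q(A u, B u') = Q(B u, A u')` for all `A, B ∈ E` and all `u, u' ∈ P`. -/
def IsAbelianSubspace {P R : Type*} [AddCommGroup P] [Module ℂ P]
    [AddCommGroup R] [Module ℂ R] (Q : R →ₗ[ℂ] R →ₗ[ℂ] ℂ)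
    (E : Submodule ℂ (P →ₗ[ℂ] R)) : Prop :=
  ∀ A ∈ E, ∀ B ∈ E, ∀ u u' : P, Q (A u) (B u') = Q (B u) (A u')

/-- If `dim P = 3` and `dim R = 2s` with `s > 0`, then there is an abelian subspace
`E ⊆ Hom(P,R)` with `dim E = 3s`; hence the bound `dim E ≤ (3/2) dim R` is sharp when
`dim R` is even. -/
theorem abelian_dim_sharp_of_rank_three_even {P R : Type*}
    [AddCommGroup P] [Module ℂ P] [FiniteDimensional ℂ P]
    [AddCommGroup R] [Module ℂ R] [FiniteDimensional ℂ R]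
    (s : ℕ) (hs : 0 < s) (hP : finrank ℂ P = 3) (hR : finrank ℂ R = 2 * s)
    (Q : R →ₗ[ℂ] R →ₗ[ℂ] ℂ)
    (hsym : ∀ x y, Q x y = Q y x)
    (hnd : ∀ x, (∀ y, Q x y = 0) → x = 0) :
    ∃ E : Submodule ℂ (P →ₗ[ℂ] R), IsAbelianSubspace Q E ∧ finrank ℂ ↥E = 3 * s := by
  unfold IsAbelianSubspace
  classical
  -- orthogonal basis
  have hQsym : Q.IsSymm := ⟨fun x y => hsym x y⟩
  obtain ⟨v, hv⟩ := LinearMap.BilinForm.exists_orthogonal_basis hQsym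
  let b : Basis (Fin (2 * s)) ℂ R := v.reindex (finCongr hR)
  have hb : ∀ i j : Fin (2 * s), i ≠ j → Q (b i) (b j) = 0 := by
    intro i j hij
    have : (finCongr hR).symm i ≠ (finCongr hR).symm j := fun h => hij (by
      simpa using congrArg (finCongr hR) h)
    simpa [b, Basis.reindex_apply] using hv this
  have hbd : ∀ i : Fin (2 * s), Q (b i) (b i) ≠ 0 := by
    intro i h
    refine b.ne_zero i (hnd _ ?_)
    have h0 : Q (b i) = 0 := b.ext fun j => by
      rcases eq_or_ne i j with rfl | hij
      · simpa using h
      · simpa using hb i j hij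
    intro y; rw [h0]; rfl
  -- indices of pairs
  set i1 : Fin s → Fin (2 * s) := fun j => ⟨2 * j, by omega⟩ with hi1
  set i2 : Fin s → Fin (2 * s) := fun j => ⟨2 * j + 1, by omega⟩ with hi2
  have hi12 : ∀ j k : Fin s, i1 j ≠ i2 k := by
    intro j k h
    have := congrArg (Fin.val) h
    simp [i1, i2] at this; omega
  have hi11 : ∀ j k : Fin s, i1 j = i1 k ↔ j = k := by
    intro j k
    constructor
    · intro h; have := congrArg (Fin.val) h; simp [i1] at this; exact Fin.ext (by omega)
    · rintro rfl; rfl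
  have hi22 : ∀ j k : Fin s, j ≠ k → i2 j ≠ i2 k := by
    intro j k hjk h
    have := congrArg (Fin.val) h; simp [i2] at this
    exact hjk (Fin.ext (by omega))
  -- square roots
  have hc : ∀ j : Fin s, ∃ c : ℂ, Q (b (i1 j)) (b (i1 j)) + c ^ 2 * Q (b (i2 j)) (b (i2 j)) = 0 := by
    intro j
    obtain ⟨c, hc⟩ := IsAlgClosed.exists_pow_nat_eq
      (-(Q (b (i1 j)) (b (i1 j))) / Q (b (i2 j)) (b (i2 j))) (n := 2) (by norm_num)
    refine ⟨c, ?_⟩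
    rw [hc, div_mul_cancel₀ _ (hbd (i2 j))]
    ring
  choose c hcs using hc
  -- isotropic vectors
  set f : Fin s → R := fun j => b (i1 j) + c j • b (i2 j) with hf
  have hQf : ∀ j k : Fin s, Q (f j) (f k) = 0 := by
    intro j k
    simp only [hf, map_add, map_smul, LinearMap.add_apply, LinearMap.smul_apply, smul_eq_mul]
    rcases eq_or_ne j k with rfl | hjk
    · rw [hb _ _ (hi12 j j), hb _ _ (Ne.symm (hi12 j j))]
      have := hcs j
      ring_nf
      ring_nf at this
      linear_combination this
    · rw [hb _ _ (fun h => hjk ((hi11 j k).mp h)), hb _ _ (hi12 j k),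
        hb _ _ (Ne.symm (hi12 k j)), hb _ _ (hi22 j k hjk)]
      ring
  -- repr of f
  have hrep : ∀ j k : Fin s, b.repr (f j) (i1 k) = if k = j then 1 else 0 := by
    intro j k
    simp only [hf, map_add, map_smul, Finsupp.add_apply, Finsupp.smul_apply, b.repr_self,
      Finsupp.single_apply, smul_eq_mul]
    rw [if_neg (Ne.symm (hi12 k j))]
    rcases eq_or_ne (i1 j) (i1 k) with h | h
    · rw [if_pos h, if_pos ((hi11 j k).mp h).symm]; ring
    · rw [if_neg h, if_neg (fun hh => h (((hi11 j k).mpr hh.symm)))]; ring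
  have hli : LinearIndependent ℂ f := by
    rw [Fintype.linearIndependent_iff]
    intro g hg i
    have := congrArg (fun x => (b.repr x) (i1 i)) hg
    simp only [map_sum, map_smul, Finsupp.coe_finset_sum, Finset.sum_apply,
      Finsupp.smul_apply, smul_eq_mul, map_zero, Finsupp.coe_zero, Pi.zero_apply] at this
    rw [Finset.sum_congr rfl (fun j _ => by rw [hrep j i])] at this
    simpa using this
  set W : Submodule ℂ R := Submodule.span ℂ (Set.range f) with hW
  have hWrank : finrank ℂ W = s := by
    rw [hW, finrank_span_eq_card hli, Fintype.card_fin]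
  -- isotropy of W
  have hWiso : ∀ x ∈ W, ∀ y ∈ W, Q x y = 0 := by
    have step1 : ∀ j : Fin s, ∀ y ∈ W, Q (f j) y = 0 := by
      intro j y hy
      have : W ≤ LinearMap.ker (Q (f j)) := by
        rw [hW, Submodule.span_le]
        rintro _ ⟨k, rfl⟩
        exact hQf j k
      exact this hy
    intro x hx y hy
    have : W ≤ LinearMap.ker (Q.flip y) := by
      rw [hW, Submodule.span_le]
      rintro _ ⟨k, rfl⟩
      exact step1 k y hy
    exact this hx
  -- the subspace E
  let Φ : (P →ₗ[ℂ] W) →ₗ[ℂ] (P →ₗ[ℂ] R) := LinearMap.llcomp ℂ P W R W.subtype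
  have hΦinj : Function.Injective Φ := by
    intro A B h
    ext u
    exact congrArg (fun g => g u) h
  refine ⟨LinearMap.range Φ, ?_, ?_⟩
  · rintro A ⟨A', rfl⟩ B ⟨B', rfl⟩ u u'
    have hA : ∀ u, (Φ A') u ∈ W := fun u => (A' u).2
    have hB : ∀ u, (Φ B') u ∈ W := fun u => (B' u).2
    rw [hWiso _ (hA u) _ (hB u'), hWiso _ (hB u) _ (hA u')]
  · rw [LinearMap.finrank_range_of_inj hΦinj, Module.finrank_linearMap, hP, hWrank]
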